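/- Soundness of the Coinduction rule: for regular expressions p and q over an alphabet Σ and a string s, if (ε ∈ L(δ_s p) ↔ ε ∈ L(δ_s q)) and for every character c ∈ Σ, Sync(s ++ [c], p, q) holds, then Sync(s, p, q) holds. -/
import Mathlib


open RegularExpression

variable {α : Type*}

/-- The derivative of a regular expression with respect to a string,
folding the Brzozowski character derivative over the string. -/
def derivs [DecidableEq α] (p : RegularExpression α) (w : List α) : RegularExpression α :=
  w.foldl RegularExpression.deriv p

/-- `w` is a counterexample for `p` and `q` if exactly one of them accepts `w`. -/
def Counterexample (p q : RegularExpression α) (w : List α) : Prop :=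
  Xor' (w ∈ p.matches') (w ∈ q.matches')

/-- A string `w` is reducible (for `p` and `q`) if `w = s ++ t ++ u` with `t` nonempty,
`L(δ_s p) = L(δ_{s++t} p)` and `L(δ_s q) = L(δ_{s++t} q)`. -/
def Reducible [DecidableEq α] (p q : RegularExpression α) (w : List α) : Prop :=
  ∃ s t u : List α, w = s ++ t ++ u ∧ t ≠ [] ∧
    (derivs p s).matches' = (derivs p (s ++ t)).matches' ∧
    (derivs q s).matches' = (derivs q (s ++ t)).matches'

/-- `Sync s p q` : `p` and `q` have no irreducible counterexample having `s` as a prefix. -/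
def Sync [DecidableEq α] (s : List α) (p q : RegularExpression α) : Prop :=
  ∀ w : List α, s <+: w → Counterexample p q w → Reducible p q w

lemma derivs_mem [DecidableEq α] (p : RegularExpression α) (w : List α) :
    w ∈ p.matches' ↔ [] ∈ (derivs p w).matches' := by
  rw [← rmatch_iff_matches', ← rmatch_iff_matches']
  induction w generalizing p with
  | nil => rfl
  | cons c w ih => simpa [derivs, rmatch] using ih (p.deriv c)

theorem coinduction_sound [DecidableEq α] (p q : RegularExpression α) (s : List α)
    (heps : ([] ∈ (derivs p s).matches') ↔ ([] ∈ (derivs q s).matches'))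
    (hsync : ∀ c : α, Sync (s ++ [c]) p q) : Sync s p q := by
  intro w hpre hce
  obtain ⟨u, rfl⟩ := hpre
  cases u with
  | nil =>
    exfalso
    rcases hce with ⟨h1, h2⟩ | ⟨h1, h2⟩
    · rw [List.append_nil] at h1 h2
      exact h2 ((derivs_mem q s).mpr (heps.mp ((derivs_mem p s).mp h1)))
    · rw [List.append_nil] at h1 h2
      exact h2 ((derivs_mem p s).mpr (heps.mpr ((derivs_mem q s).mp h1)))
  | cons c u =>
    exact hsync c (s ++ c :: u) ⟨u, by simp⟩ hce
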